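/- Let l ≥ 5 and let C_l be the cycle graph on vertices c_0, c_1, …, c_{l−1}. Apply the X measurement at c_0 with chosen neighbour c_{l−1}. The resulting graph has vertex set {c_1, …, c_{l−1}} and its edges are exactly: c_i–c_{i+1} for 1 ≤ i ≤ l−3, together with c_1–c_{l−2} and c_1–c_{l−1}. In other words, the result is a cycle of length l−2 on c_1, …, c_{l−2} together with the pendant vertex c_{l−1} attached to c_1. -/

import Mathlib

/-- A finite simple graph with an explicit vertex set inside an ambient type `α`. -/
structure FGraph (α : Type*) where
  verts : Set α
  Adj : α → α → Prop
  symm : ∀ {a b}, Adj a b → Adj b a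
  loopless : ∀ a, ¬ Adj a a
  edge_mem : ∀ {a b}, Adj a b → a ∈ verts ∧ b ∈ verts

namespace FGraph

variable {α : Type*}

/-- Local complementation at `v`: two distinct vertices are adjacent iff exactly one of
(adjacent in `G`) or (both neighbours of `v` in `G`) holds. -/
def LC (G : FGraph α) (v : α) : FGraph α where
  verts := G.verts
  Adj a b := a ≠ b ∧ Xor' (G.Adj a b) (G.Adj v a ∧ G.Adj v b)
  symm := by
    rintro a b ⟨hne, h⟩
    refine ⟨hne.symm, ?_⟩
    rcases h with ⟨h1, h2⟩ | ⟨h1, h2⟩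
    · exact Or.inl ⟨G.symm h1, fun hx => h2 ⟨hx.2, hx.1⟩⟩
    · exact Or.inr ⟨⟨h1.2, h1.1⟩, fun hx => h2 (G.symm hx)⟩
  loopless := fun a h => h.1 rfl
  edge_mem := by
    rintro a b ⟨hne, h⟩
    rcases h with ⟨h1, _⟩ | ⟨⟨ha, hb⟩, _⟩
    · exact G.edge_mem h1
    · exact ⟨(G.edge_mem ha).2, (G.edge_mem hb).2⟩

/-- Z measurement at `v`: delete the vertex `v` together with all incident edges. -/
def ZM (G : FGraph α) (v : α) : FGraph α where
  verts := G.verts \ {v}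
  Adj a b := G.Adj a b ∧ a ≠ v ∧ b ≠ v
  symm := fun h => ⟨G.symm h.1, h.2.2, h.2.1⟩
  loopless := fun a h => G.loopless a h.1
  edge_mem := by
    rintro a b ⟨h, ha, hb⟩
    exact ⟨⟨(G.edge_mem h).1, ha⟩, ⟨(G.edge_mem h).2, hb⟩⟩

/-- X measurement at `u` with chosen neighbour `w`:
`X_u(G) = LC_w(Z_u(LC_u(LC_w(G))))`. -/
def XM (G : FGraph α) (u w : α) : FGraph α :=
  ((((G.LC w).LC u).ZM u).LC w)

/-- Y measurement at `v`: `Y_v(G) = Z_v(LC_v(G))`. -/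
def YM (G : FGraph α) (v : α) : FGraph α :=
  (G.LC v).ZM v

/-- `G` is a star graph with centre `c`. -/
def IsStar (G : FGraph α) (c : α) : Prop :=
  c ∈ G.verts ∧
    ∀ a b, G.Adj a b ↔ (a ≠ b ∧ a ∈ G.verts ∧ b ∈ G.verts ∧ (a = c ∨ b = c))

/-- `G` is a complete graph on its vertex set. -/
def IsComplete (G : FGraph α) : Prop :=
  ∀ a b, G.Adj a b ↔ (a ≠ b ∧ a ∈ G.verts ∧ b ∈ G.verts)

/-- One step of local complementation or vertex deletion. -/
inductive Step : FGraph α → FGraph α → Prop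
  | lc (G : FGraph α) (v : α) : Step G (G.LC v)
  | del (G : FGraph α) (v : α) : Step G (G.ZM v)

/-- `H` is a vertex-minor of `G`: `H` is obtained from `G` by a finite sequence of
local complementations and vertex deletions. -/
def IsVertexMinor (H G : FGraph α) : Prop :=
  Relation.ReflTransGen Step G H

/-- One step of local complementation. -/
inductive LCStep : FGraph α → FGraph α → Prop
  | lc (G : FGraph α) (v : α) : LCStep G (G.LC v)

/-- `H` is obtained from `G` by a finite sequence of local complementations. -/
def LCReach (G H : FGraph α) : Prop :=
  Relation.ReflTransGen LCStep G H

end FGraph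

/-- The cycle graph on vertices `0, 1, …, l-1`, with `i` adjacent to `j`
iff `i - j ≡ ±1 (mod l)`. -/
def cycleGraph (l : ℕ) : FGraph ℕ where
  verts := {i | i < l}
  Adj a b := a < l ∧ b < l ∧ a ≠ b ∧ ((a + 1) % l = b ∨ (b + 1) % l = a)
  symm := fun h => ⟨h.2.1, h.1, h.2.2.1.symm, h.2.2.2.symm⟩
  loopless := fun a h => h.2.2.1 rfl
  edge_mem := fun h => ⟨h.1, h.2.1⟩

set_option maxHeartbeats 1000000 in
/-- for `l ≥ 5`, the X measurement at `c₀` of the cycle `C_l`,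
with chosen neighbour `c_{l-1}`, yields the cycle of length `l-2` on
`c₁, …, c_{l-2}` together with the pendant vertex `c_{l-1}` attached to `c₁`. -/
theorem xMeasurement_cycle (l : ℕ) (hl : 5 ≤ l) :
    ((cycleGraph l).XM 0 (l - 1)).verts = {i | 0 < i ∧ i < l} ∧
    ∀ a b, ((cycleGraph l).XM 0 (l - 1)).Adj a b ↔
      ((b = a + 1 ∧ 1 ≤ a ∧ a ≤ l - 3) ∨
       (a = b + 1 ∧ 1 ≤ b ∧ b ≤ l - 3) ∨
       (a = 1 ∧ (b = l - 2 ∨ b = l - 1)) ∨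
       (b = 1 ∧ (a = l - 2 ∨ a = l - 1))) := by
  -- arithmetic characterization of the cycle adjacency
  have cyc : ∀ x y, (cycleGraph l).Adj x y ↔
      (x < l ∧ y < l ∧ x ≠ y ∧
        (x + 1 = y ∨ y + 1 = x ∨ (x = 0 ∧ y = l - 1) ∨ (y = 0 ∧ x = l - 1))) := by
    intro x y
    show (x < l ∧ y < l ∧ x ≠ y ∧ ((x + 1) % l = y ∨ (y + 1) % l = x)) ↔ _
    constructor
    · rintro ⟨hx, hy, hne, h | h⟩ <;>
      [ rcases lt_or_eq_of_le (Nat.succ_le_of_lt hx) with h' | h';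
        rcases lt_or_eq_of_le (Nat.succ_le_of_lt hy) with h' | h' ]
      · rw [Nat.mod_eq_of_lt h'] at h; exact ⟨hx, hy, hne, by omega⟩
      · rw [show x + 1 = l by omega, Nat.mod_self] at h; exact ⟨hx, hy, hne, by omega⟩
      · rw [Nat.mod_eq_of_lt h'] at h; exact ⟨hx, hy, hne, by omega⟩
      · rw [show y + 1 = l by omega, Nat.mod_self] at h; exact ⟨hx, hy, hne, by omega⟩
    · rintro ⟨hx, hy, hne, h⟩
      refine ⟨hx, hy, hne, ?_⟩
      rcases h with h | h | ⟨h1, h2⟩ | ⟨h1, h2⟩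
      · left; rw [Nat.mod_eq_of_lt (by omega)]; omega
      · right; rw [Nat.mod_eq_of_lt (by omega)]; omega
      · right; subst h1 h2; rw [Nat.sub_add_cancel (by omega), Nat.mod_self]
      · left; subst h1 h2; rw [Nat.sub_add_cancel (by omega), Nat.mod_self]
  -- neighbours of l-1 in the cycle
  have nw : ∀ x, (cycleGraph l).Adj (l - 1) x ↔ (x = 0 ∨ x = l - 2) := by
    intro x; rw [cyc]; omega
  set G1 := (cycleGraph l).LC (l - 1)
  have h1 : ∀ x y, G1.Adj x y ↔
      (x < l ∧ y < l ∧ x ≠ y ∧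
        (x + 1 = y ∨ y + 1 = x ∨ (x = 0 ∧ y = l - 1) ∨ (y = 0 ∧ x = l - 1) ∨
         (x = 0 ∧ y = l - 2) ∨ (y = 0 ∧ x = l - 2))) := by
    intro x y
    show (x ≠ y ∧ Xor' ((cycleGraph l).Adj x y)
      ((cycleGraph l).Adj (l - 1) x ∧ (cycleGraph l).Adj (l - 1) y)) ↔ _
    simp only [nw]
    simp only [cyc, Xor', Xor]
    omega
  -- neighbours of 0 in G1
  have n0 : ∀ x, G1.Adj 0 x ↔ (x = 1 ∨ x = l - 1 ∨ x = l - 2) := by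
    intro x; rw [h1]; omega
  set G2 := G1.LC 0
  have h2 : ∀ x y, G2.Adj x y ↔
      (x < l ∧ y < l ∧ x ≠ y ∧
        ((x + 1 = y ∧ x ≠ l - 2) ∨ (y + 1 = x ∧ y ≠ l - 2) ∨
         (x = 0 ∧ y = l - 1) ∨ (y = 0 ∧ x = l - 1) ∨
         (x = 0 ∧ y = l - 2) ∨ (y = 0 ∧ x = l - 2) ∨
         (x = 1 ∧ (y = l - 1 ∨ y = l - 2)) ∨ (y = 1 ∧ (x = l - 1 ∨ x = l - 2)))) := by
    intro x y
    show (x ≠ y ∧ Xor' (G1.Adj x y) (G1.Adj 0 x ∧ G1.Adj 0 y)) ↔ _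
    simp only [n0]
    simp only [h1, Xor', Xor]
    constructor
    · rintro ⟨hne, ⟨⟨hx, hy, -, hd⟩, hN⟩ | ⟨⟨hx', hy'⟩, hP⟩⟩
      · refine ⟨hx, hy, hne, ?_⟩
        rcases hd with h | h | h | h | h | h <;> omega
      · rcases hx' with h | h | h <;> rcases hy' with h' | h' | h' <;> omega
    · rintro ⟨hx, hy, hne, hd⟩
      refine ⟨hne, ?_⟩
      rcases hd with h | h | h | h | h | h | h | h
      · exact Or.inl ⟨⟨hx, hy, hne, by omega⟩, by omega⟩
      · exact Or.inl ⟨⟨hx, hy, hne, by omega⟩, by omega⟩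
      · exact Or.inl ⟨⟨hx, hy, hne, by omega⟩, by omega⟩
      · exact Or.inl ⟨⟨hx, hy, hne, by omega⟩, by omega⟩
      · exact Or.inl ⟨⟨hx, hy, hne, by omega⟩, by omega⟩
      · exact Or.inl ⟨⟨hx, hy, hne, by omega⟩, by omega⟩
      · exact Or.inr ⟨⟨by omega, by omega⟩, by omega⟩
      · exact Or.inr ⟨⟨by omega, by omega⟩, by omega⟩
  set G3 := G2.ZM 0
  have h3 : ∀ x y, G3.Adj x y ↔
      (0 < x ∧ x < l ∧ 0 < y ∧ y < l ∧ x ≠ y ∧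
        ((x + 1 = y ∧ x ≠ l - 2) ∨ (y + 1 = x ∧ y ≠ l - 2) ∨
         (x = 1 ∧ (y = l - 1 ∨ y = l - 2)) ∨ (y = 1 ∧ (x = l - 1 ∨ x = l - 2)))) := by
    intro x y
    show (G2.Adj x y ∧ x ≠ 0 ∧ y ≠ 0) ↔ _
    simp only [h2]
    constructor
    · rintro ⟨⟨hx, hy, hne, hd⟩, hx0, hy0⟩
      refine ⟨by omega, hx, by omega, hy, hne, ?_⟩
      rcases hd with h | h | h | h | h | h | h | h <;> omega
    · rintro ⟨hx0, hx, hy0, hy, hne, hd⟩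
      refine ⟨⟨hx, hy, hne, ?_⟩, by omega, by omega⟩
      rcases hd with h | h | h | h <;> omega
  -- neighbours of l-1 in G3
  have nw3 : ∀ x, G3.Adj (l - 1) x ↔ x = 1 := by
    intro x; rw [h3]; omega
  have hXM : (cycleGraph l).XM 0 (l - 1) = G3.LC (l - 1) := rfl
  constructor
  · rw [hXM]
    ext i
    show (i ∈ (cycleGraph l).verts \ {0}) ↔ _
    show (i < l ∧ i ∉ ({0} : Set ℕ)) ↔ _
    simp only [Set.mem_singleton_iff, Set.mem_setOf_eq]
    omega
  · intro a b
    rw [hXM]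
    show (a ≠ b ∧ Xor' (G3.Adj a b) (G3.Adj (l - 1) a ∧ G3.Adj (l - 1) b)) ↔ _
    simp only [nw3]
    simp only [h3, Xor', Xor]
    constructor
    · rintro ⟨hne, ⟨⟨ha0, ha, hb0, hb, -, hd⟩, -⟩ | ⟨⟨h1', h2'⟩, -⟩⟩
      · rcases hd with h | h | h | h <;> omega
      · omega
    · rintro hd
      rcases hd with h | h | h | h <;>
        exact ⟨by omega, Or.inl ⟨⟨by omega, by omega, by omega, by omega, by omega,
          by omega⟩, by omega⟩⟩
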